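/- Let p > 1 and let h(r) = 2·arctan(r) for r > 0. Then h solves the equation (p-1)h'²h'' + (p-3)(h'² sin h cos h / r² − h' sin²h / r³) + h'³/r + h'' sin²h / r² − sin³h cos h / r⁴ = 0 on (0,∞) if and only if p = 2. -/

import Mathlib

open Real

/-- `h` solves the rotationally symmetric `p`-harmonic Euler–Lagrange ODE on `S`. -/
def SolvesODE (p : ℝ) (h : ℝ → ℝ) (S : Set ℝ) : Prop :=
  ∀ r ∈ S,
    (p - 1) * (deriv h r) ^ 2 * deriv (deriv h) r +
      (p - 3) * ((deriv h r) ^ 2 * Real.sin (h r) * Real.cos (h r) / r ^ 2 -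
        deriv h r * (Real.sin (h r)) ^ 2 / r ^ 3) +
      (deriv h r) ^ 3 / r + deriv (deriv h) r * (Real.sin (h r)) ^ 2 / r ^ 2 -
      (Real.sin (h r)) ^ 3 * Real.cos (h r) / r ^ 4 = 0

lemma deriv_h : deriv (fun r : ℝ => 2 * Real.arctan r) = fun r => 2 / (1 + r ^ 2) := by
  funext x
  have := ((Real.hasDerivAt_arctan x).const_mul 2).deriv
  rw [this]; ring

lemma deriv2_h (r : ℝ) :
    deriv (deriv (fun r : ℝ => 2 * Real.arctan r)) r = -4 * r / (1 + r ^ 2) ^ 2 := by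
  rw [deriv_h]
  have h1 : (1 : ℝ) + r ^ 2 ≠ 0 := by positivity
  have hd : HasDerivAt (fun x : ℝ => 1 + x ^ 2) (2 * r) r := by
    simpa using (hasDerivAt_pow 2 r).const_add 1
  have := ((hasDerivAt_const r (2:ℝ)).div hd h1).deriv
  rw [show (fun r : ℝ => 2 / (1 + r ^ 2)) = ((fun _ => (2:ℝ)) / fun x => 1 + x ^ 2) from rfl, this]; field_simp; ring

lemma sin_h (r : ℝ) : Real.sin (2 * Real.arctan r) = 2 * r / (1 + r ^ 2) := by
  have hs : Real.sqrt (1 + r ^ 2) ^ 2 = 1 + r ^ 2 := Real.sq_sqrt (by positivity)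
  have h0 : Real.sqrt (1 + r ^ 2) ≠ 0 := by positivity
  rw [Real.sin_two_mul, Real.sin_arctan, Real.cos_arctan]
  field_simp; rw [hs]

lemma cos_h (r : ℝ) : Real.cos (2 * Real.arctan r) = (1 - r ^ 2) / (1 + r ^ 2) := by
  have hs : Real.sqrt (1 + r ^ 2) ^ 2 = 1 + r ^ 2 := Real.sq_sqrt (by positivity)
  have h1 : (1 : ℝ) + r ^ 2 ≠ 0 := by positivity
  rw [Real.cos_two_mul, Real.cos_arctan]
  rw [div_pow, one_pow, hs]
  field_simp
  ring

lemma key (p r : ℝ) (hr : 0 < r) :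
    (p - 1) * (deriv (fun r : ℝ => 2 * Real.arctan r) r) ^ 2 *
        deriv (deriv (fun r : ℝ => 2 * Real.arctan r)) r +
      (p - 3) * ((deriv (fun r : ℝ => 2 * Real.arctan r) r) ^ 2 *
          Real.sin (2 * Real.arctan r) * Real.cos (2 * Real.arctan r) / r ^ 2 -
        deriv (fun r : ℝ => 2 * Real.arctan r) r * (Real.sin (2 * Real.arctan r)) ^ 2 / r ^ 3) +
      (deriv (fun r : ℝ => 2 * Real.arctan r) r) ^ 3 / r +
        deriv (deriv (fun r : ℝ => 2 * Real.arctan r)) r *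
          (Real.sin (2 * Real.arctan r)) ^ 2 / r ^ 2 -
      (Real.sin (2 * Real.arctan r)) ^ 3 * Real.cos (2 * Real.arctan r) / r ^ 4 =
      32 * r * (2 - p) / (1 + r ^ 2) ^ 4 := by
  have h1 : (1 : ℝ) + r ^ 2 ≠ 0 := by positivity
  have hr0 : r ≠ 0 := ne_of_gt hr
  rw [deriv2_h, deriv_h, sin_h, cos_h]
  field_simp
  ring

/-- `h(r) = 2 arctan r` solves the Euler–Lagrange ODE on `(0,∞)` iff `p = 2`. -/
theorem stmt10 (p : ℝ) (hp : 1 < p) :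
    SolvesODE p (fun r => 2 * Real.arctan r) (Set.Ioi 0) ↔ p = 2 := by
  constructor
  · intro h
    have := h 1 (by norm_num)
    rw [key p 1 one_pos] at this
    have h16 : ((1:ℝ) + 1 ^ 2) ^ 4 = 16 := by norm_num
    rw [h16] at this
    have : 32 * 1 * (2 - p) = 0 := by
      field_simp at this; linarith
    linarith
  · intro hp2 r hr
    rw [Set.mem_Ioi] at hr
    rw [key p r hr, hp2]
    simp
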